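/- For every ρ̄ of the form ρ̄ = μ̄(f₁,f₂) with f₁, f₂ nonnegative, neither almost-everywhere zero, and ν₁₂(1+|v|²)f₁, ν₂₁(1+|v|²)f₂ integrable, the mixture dual function λ ↦ z̄(λ; ρ̄) attains its infimum over Λ̄ = { λ = (λ₀¹,λ₀²,λ₁,λ₂) ∈ ℝ⁶ : λ₂ < 0 } at a unique point λ* ∈ Λ̄. -/

import Mathlib

open MeasureTheory Real Filter
open scoped Topology

noncomputable section

abbrev V3 : Type := Fin 3 → ℝ

def dot3 (a b : V3) : ℝ := ∑ i, a i * b i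

def nsq (v : V3) : ℝ := ∑ i, (v i) ^ 2

abbrev L5 : Type := ℝ × V3 × ℝ

def dot5 (a b : L5) : ℝ := a.1 * b.1 + dot3 a.2.1 b.2.1 + a.2.2 * b.2.2

def aVec (m : ℝ) (v : V3) : L5 := (m, m • v, m * nsq v)

def expA (m : ℝ) (l : L5) (v : V3) : ℝ := Real.exp (dot5 l (aVec m v))

def momVec (m : ℝ) (ν g : V3 → ℝ) : L5 :=
  (∫ v, ν v * (m * g v), fun i => ∫ v, ν v * (m * v i) * g v,
    ∫ v, ν v * (m * nsq v) * g v)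

def zdual (m : ℝ) (ν : V3 → ℝ) (l ρ : L5) : ℝ :=
  (∫ v, ν v * expA m l v) - dot5 l ρ

def entH (z : ℝ) : ℝ := z * Real.log z - z

def dualCLM (ρ : L5) : L5 →L[ℝ] ℝ :=
  LinearMap.toContinuousLinearMap
    { toFun := fun δ => dot5 δ ρ
      map_add' := by
        intro a b
        simp [dot5, dot3, Prod.fst_add, Prod.snd_add, Pi.add_apply, add_mul,
          Finset.sum_add_distrib]
        ring
      map_smul' := by
        intro c a
        simp only [dot5, dot3, Prod.smul_fst, Prod.smul_snd, Pi.smul_apply,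
          smul_eq_mul, Finset.mul_sum, RingHom.id_apply]
        ring_nf
        rw [Finset.mul_sum]
        ring_nf }


abbrev L6 : Type := ℝ × ℝ × V3 × ℝ

/-- First-species component `λ¹ = (λ₀¹, λ₁, λ₂)` of `λ = (λ₀¹, λ₀², λ₁, λ₂)`. -/
def comp1 (l : L6) : L5 := (l.1, l.2.2.1, l.2.2.2)

/-- Second-species component `λ² = (λ₀², λ₁, λ₂)`. -/
def comp2 (l : L6) : L5 := (l.2.1, l.2.2.1, l.2.2.2)

def dot6 (a b : L6) : ℝ :=
  a.1 * b.1 + a.2.1 * b.2.1 + dot3 a.2.2.1 b.2.2.1 + a.2.2.2 * b.2.2.2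

/-- The mixture functional `Φ(λ) = ∫ ν₁₂ exp(λ¹·a¹) + ∫ ν₂₁ exp(λ²·a²)`. -/
def PhiMix (m₁ m₂ : ℝ) (ν₁₂ ν₂₁ : V3 → ℝ) (l : L6) : ℝ :=
  (∫ v, ν₁₂ v * expA m₁ (comp1 l) v) + (∫ v, ν₂₁ v * expA m₂ (comp2 l) v)

/-- The mixture moment map `μ̄(g₁,g₂) ∈ ℝ⁶`. -/
def muBar (m₁ m₂ : ℝ) (ν₁₂ ν₂₁ g₁ g₂ : V3 → ℝ) : L6 :=
  (∫ v, m₁ * ν₁₂ v * g₁ v,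
   ∫ v, m₂ * ν₂₁ v * g₂ v,
   fun i => (∫ v, m₁ * ν₁₂ v * v i * g₁ v) + ∫ v, m₂ * ν₂₁ v * v i * g₂ v,
   (∫ v, m₁ * ν₁₂ v * nsq v * g₁ v) + ∫ v, m₂ * ν₂₁ v * nsq v * g₂ v)

/-- The mixture dual function `z̄(λ;ρ̄) = Φ(λ) − λ·ρ̄`. -/
def zbar (m₁ m₂ : ℝ) (ν₁₂ ν₂₁ : V3 → ℝ) (l ρ : L6) : ℝ :=
  PhiMix m₁ m₂ ν₁₂ ν₂₁ l - dot6 l ρ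

section AuxBasic

lemma nsq_nonneg (v : V3) : 0 ≤ nsq v := by
  unfold nsq; positivity

lemma one_add_nsq_pos (v : V3) : (0:ℝ) < 1 + nsq v := by
  have := nsq_nonneg v; linarith

lemma sq_coord_le (v : V3) (i : Fin 3) : (v i)^2 ≤ nsq v := by
  unfold nsq
  exact Finset.single_le_sum (f := fun j => (v j)^2) (fun j _ => sq_nonneg _) (Finset.mem_univ i)

lemma abs_coord_le (v : V3) (i : Fin 3) : |v i| ≤ 1 + nsq v := by
  have h1 : |v i| ≤ (1 + (v i)^2) / 2 := by
    nlinarith [sq_nonneg (|v i| - 1), sq_abs (v i)]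
  have := sq_coord_le v i
  have := nsq_nonneg v
  linarith

lemma dot5_aVec_eq (c : L5) (m : ℝ) (v : V3) :
    dot5 c (aVec m v) = m * (c.1 + dot3 c.2.1 v + c.2.2 * nsq v) := by
  simp only [dot5, aVec, dot3, Pi.smul_apply, smul_eq_mul, Fin.sum_univ_three]
  ring

/-- coefficient-sum constant for bounding the polynomial `dot5 c (aVec m v)`. -/
def KC (c : L5) (m : ℝ) : ℝ := |m| * (|c.1| + (|c.2.1 0| + |c.2.1 1| + |c.2.1 2|) + |c.2.2|)

lemma KC_nonneg (c : L5) (m : ℝ) : 0 ≤ KC c m := by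
  unfold KC; positivity

lemma abs_dot3_le (a v : V3) : |dot3 a v| ≤ (|a 0| + |a 1| + |a 2|) * (1 + nsq v) := by
  have h : dot3 a v = a 0 * v 0 + a 1 * v 1 + a 2 * v 2 := by
    simp [dot3, Fin.sum_univ_three]
  rw [h]
  have h0 := abs_coord_le v 0
  have h1 := abs_coord_le v 1
  have h2 := abs_coord_le v 2
  have b0 : |a 0 * v 0| ≤ |a 0| * (1 + nsq v) := by
    rw [abs_mul]; exact mul_le_mul_of_nonneg_left h0 (abs_nonneg _)
  have b1 : |a 1 * v 1| ≤ |a 1| * (1 + nsq v) := by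
    rw [abs_mul]; exact mul_le_mul_of_nonneg_left h1 (abs_nonneg _)
  have b2 : |a 2 * v 2| ≤ |a 2| * (1 + nsq v) := by
    rw [abs_mul]; exact mul_le_mul_of_nonneg_left h2 (abs_nonneg _)
  calc |a 0 * v 0 + a 1 * v 1 + a 2 * v 2| ≤ |a 0 * v 0 + a 1 * v 1| + |a 2 * v 2| := abs_add_le _ _
    _ ≤ |a 0 * v 0| + |a 1 * v 1| + |a 2 * v 2| := by
        have := abs_add_le (a 0 * v 0) (a 1 * v 1); linarith
    _ ≤ (|a 0| + |a 1| + |a 2|) * (1 + nsq v) := by linarith [b0, b1, b2]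

lemma abs_dot5_aVec_le (c : L5) (m : ℝ) (v : V3) :
    |dot5 c (aVec m v)| ≤ KC c m * (1 + nsq v) := by
  rw [dot5_aVec_eq, abs_mul, KC]
  have hpos := one_add_nsq_pos v
  have hns := nsq_nonneg v
  have h1 : |c.1| ≤ |c.1| * (1 + nsq v) := le_mul_of_one_le_right (abs_nonneg _) (by linarith)
  have h2 := abs_dot3_le c.2.1 v
  have h3 : |c.2.2 * nsq v| ≤ |c.2.2| * (1 + nsq v) := by
    rw [abs_mul]
    refine mul_le_mul_of_nonneg_left ?_ (abs_nonneg _)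
    rw [abs_of_nonneg hns]; linarith
  have : |c.1 + dot3 c.2.1 v + c.2.2 * nsq v| ≤
      |c.1| + |dot3 c.2.1 v| + |c.2.2 * nsq v| := by
    calc _ ≤ |c.1 + dot3 c.2.1 v| + |c.2.2 * nsq v| := abs_add_le _ _
      _ ≤ _ := by have := abs_add_le c.1 (dot3 c.2.1 v); linarith
  have hfin : |c.1 + dot3 c.2.1 v + c.2.2 * nsq v| ≤
      (|c.1| + (|c.2.1 0| + |c.2.1 1| + |c.2.1 2|) + |c.2.2|) * (1 + nsq v) := by
    have := h2
    nlinarith [abs_nonneg (dot3 c.2.1 v)]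
  calc |m| * |c.1 + dot3 c.2.1 v + c.2.2 * nsq v|
      ≤ |m| * ((|c.1| + (|c.2.1 0| + |c.2.1 1| + |c.2.1 2|) + |c.2.2|) * (1 + nsq v)) :=
        mul_le_mul_of_nonneg_left hfin (abs_nonneg _)
    _ = _ := by ring

lemma continuous_dot5_aVec (c : L5) (m : ℝ) : Continuous fun v => dot5 c (aVec m v) := by
  simp only [dot5_aVec_eq]
  unfold dot3 nsq
  fun_prop

lemma continuous_dot5_left (b : L5) : Continuous fun a : L5 => dot5 a b := by
  unfold dot5 dot3
  fun_prop

end AuxBasic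
section PolyNull

lemma nsq_sphere_null (r : ℝ) : volume {v : V3 | nsq v = r} = 0 := by
  have hmeas : MeasurableSet {v : V3 | nsq v = r} := by
    have : Continuous (nsq : V3 → ℝ) := by unfold nsq; fun_prop
    exact this.measurable (measurableSet_singleton r)
  have hp := EuclideanSpace.volume_preserving_symm_measurableEquiv_toLp (Fin 3)
  rw [← hp.measure_preimage hmeas.nullMeasurableSet]
  have hset : (MeasurableEquiv.toLp 2 (Fin 3 → ℝ)).symm ⁻¹' {v : V3 | nsq v = r}
      = {x : EuclideanSpace ℝ (Fin 3) | ‖x‖^2 = r} := by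
    ext x
    simp only [Set.mem_preimage, Set.mem_setOf_eq]
    have hn : ‖x‖^2 = nsq ((MeasurableEquiv.toLp 2 (Fin 3 → ℝ)).symm x) := by
      rw [EuclideanSpace.norm_eq, Real.sq_sqrt (by positivity)]
      unfold nsq
      refine Finset.sum_congr rfl fun i _ => ?_
      rw [Real.norm_eq_abs, sq_abs]
      rfl
    rw [hn]
  rw [hset]
  rcases le_or_gt 0 r with hr | hr
  · have : {x : EuclideanSpace ℝ (Fin 3) | ‖x‖^2 = r} = Metric.sphere 0 (Real.sqrt r) := by
      ext x
      simp only [Set.mem_setOf_eq, Metric.mem_sphere, dist_zero_right]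
      constructor
      · intro h; rw [← h, Real.sqrt_sq (norm_nonneg _)]
      · intro h; rw [h, Real.sq_sqrt hr]
    rw [this]
    exact Measure.addHaar_sphere volume _ _
  · have : {x : EuclideanSpace ℝ (Fin 3) | ‖x‖^2 = r} = ∅ := by
      ext x
      simp only [Set.mem_setOf_eq, Set.mem_empty_iff_false, iff_false]
      intro h
      nlinarith [norm_nonneg x, sq_nonneg ‖x‖]
    rw [this]; simp

lemma hyperplane_null (a : V3) (ha : a ≠ 0) (c : ℝ) :
    volume {v : V3 | dot3 a v = c} = 0 := by
  have hdd : 0 < dot3 a a := by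
    have hne : ∃ i, a i ≠ 0 := by
      by_contra h
      push_neg at h
      exact ha (funext h)
    obtain ⟨i, hi⟩ := hne
    have : (0:ℝ) < a i ^ 2 := by positivity
    have hle : a i ^ 2 ≤ dot3 a a := by
      unfold dot3
      have : ∀ j, a j * a j = a j ^2 := fun j => by ring
      simp_rw [this]
      exact Finset.single_le_sum (f := fun j => (a j)^2) (fun j _ => sq_nonneg _)
        (Finset.mem_univ i)
    linarith
  set f : V3 →ₗ[ℝ] ℝ :=
    { toFun := fun v => dot3 a v
      map_add' := by
        intro x y
        unfold dot3
        simp [mul_add, Finset.sum_add_distrib]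
      map_smul' := by
        intro t x
        unfold dot3
        simp [Finset.mul_sum]
        refine Finset.sum_congr rfl fun i _ => by ring } with hf
  set x₀ : V3 := (c / dot3 a a) • a with hx₀
  have hfx₀ : f x₀ = c := by
    rw [hx₀, LinearMap.map_smul]
    simp only [smul_eq_mul]
    have : f a = dot3 a a := rfl
    rw [this]
    field_simp
  have hseteq : {v : V3 | dot3 a v = c} = (fun v => v + -x₀) ⁻¹' (LinearMap.ker f : Set V3) := by
    ext v
    simp only [Set.mem_setOf_eq, Set.mem_preimage, SetLike.mem_coe, LinearMap.mem_ker,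
      map_add, map_neg, hfx₀]
    show dot3 a v = c ↔ f v + -c = 0
    have : f v = dot3 a v := rfl
    rw [this]
    constructor <;> intro h <;> linarith
  rw [hseteq, measure_preimage_add_right]
  refine Measure.addHaar_submodule volume _ ?_
  intro h
  have : a ∈ LinearMap.ker f := h ▸ Submodule.mem_top
  have : f a = 0 := this
  have : dot3 a a = 0 := this
  linarith

lemma poly_null (δ : L5) (hδ : δ ≠ 0) :
    volume {v : V3 | δ.1 + dot3 δ.2.1 v + δ.2.2 * nsq v = 0} = 0 := by
  rcases eq_or_ne δ.2.2 0 with h2 | h2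
  · rcases eq_or_ne δ.2.1 0 with h1 | h1
    · -- constant polynomial, δ.1 ≠ 0, empty set
      have h0 : δ.1 ≠ 0 := by
        intro h0
        apply hδ
        have : δ = (δ.1, δ.2.1, δ.2.2) := rfl
        rw [this, h0, h1, h2]
        rfl
      have : {v : V3 | δ.1 + dot3 δ.2.1 v + δ.2.2 * nsq v = 0} = ∅ := by
        ext v
        simp only [Set.mem_setOf_eq, Set.mem_empty_iff_false, iff_false]
        rw [h1, h2]
        unfold dot3
        simp [h0]
      rw [this]; simp
  -- affine case
    · have : {v : V3 | δ.1 + dot3 δ.2.1 v + δ.2.2 * nsq v = 0}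
          = {v : V3 | dot3 δ.2.1 v = -δ.1} := by
        ext v
        simp only [Set.mem_setOf_eq, h2]
        constructor <;> intro h <;> linarith
      rw [this]
      exact hyperplane_null _ h1 _
  · -- genuinely quadratic: complete the square
    set w : V3 := (1 / (2 * δ.2.2)) • δ.2.1 with hw
    set r : ℝ := nsq w - δ.1 / δ.2.2 with hr
    have hsub : {v : V3 | δ.1 + dot3 δ.2.1 v + δ.2.2 * nsq v = 0}
        ⊆ {v : V3 | nsq (v + w) = r} := by
      intro v hv
      simp only [Set.mem_setOf_eq] at hv ⊢
      have hnsq : nsq (v + w) = nsq v + 2 * dot3 w v + nsq w := by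
        unfold nsq dot3
        rw [Finset.mul_sum, ← Finset.sum_add_distrib, ← Finset.sum_add_distrib]
        refine Finset.sum_congr rfl fun i _ => ?_
        simp only [Pi.add_apply]
        ring
      have hdw : 2 * dot3 w v = dot3 δ.2.1 v / δ.2.2 := by
        rw [hw]
        unfold dot3
        simp only [Pi.smul_apply, smul_eq_mul]
        rw [Finset.mul_sum, Finset.sum_div]
        refine Finset.sum_congr rfl fun i _ => ?_
        field_simp
      have hv' : nsq v = -(δ.1 + dot3 δ.2.1 v) / δ.2.2 := by
        field_simp
        linarith
      rw [hnsq, hdw, hv', hr]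
      field_simp
      ring
    refine measure_mono_null hsub ?_
    have : {v : V3 | nsq (v + w) = r} = (fun v : V3 => v + w) ⁻¹' {v : V3 | nsq v = r} := rfl
    rw [this, measure_preimage_add_right]
    exact nsq_sphere_null r

end PolyNull
section AuxInt

lemma measurable_expA (m : ℝ) (l : L5) : Measurable (expA m l) := by
  have : Continuous (expA m l) := Real.continuous_exp.comp (continuous_dot5_aVec l m)
  exact this.measurable

lemma integrable_weighted {ν g : V3 → ℝ} (hνm : Measurable ν) (hgm : Measurable g)
    (hν0 : ∀ v, 0 ≤ ν v) (hg0 : ∀ v, 0 ≤ g v)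
    (hνg : Integrable (fun v => ν v * (1 + nsq v) * g v))
    {w : V3 → ℝ} (hwm : Measurable w) {C : ℝ}
    (hC : ∀ v, |w v| ≤ C * (1 + nsq v)) :
    Integrable (fun v => ν v * w v * g v) := by
  refine (hνg.const_mul C).mono ?_ ?_
  · exact ((hνm.mul hwm).mul hgm).aestronglyMeasurable
  · refine Filter.Eventually.of_forall fun v => ?_
    have hC0 : 0 ≤ C := by
      have h0 := hC 0
      have : nsq (0 : V3) = 0 := by unfold nsq; simp
      rw [this] at h0
      have := abs_nonneg (w 0)
      linarith
    have h1 : ‖ν v * w v * g v‖ = ν v * |w v| * g v := by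
      rw [Real.norm_eq_abs, abs_mul, abs_mul, abs_of_nonneg (hν0 v), abs_of_nonneg (hg0 v)]
    have h2 : ‖C * (ν v * (1 + nsq v) * g v)‖ = C * (ν v * (1 + nsq v) * g v) := by
      rw [Real.norm_eq_abs, abs_of_nonneg]
      have := one_add_nsq_pos v
      have := hν0 v
      have := hg0 v
      positivity
    rw [h1, h2]
    calc ν v * |w v| * g v ≤ ν v * (C * (1 + nsq v)) * g v :=
          mul_le_mul_of_nonneg_right (mul_le_mul_of_nonneg_left (hC v) (hν0 v)) (hg0 v)
      _ = C * (ν v * (1 + nsq v) * g v) := by ring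

lemma contAt_int_exp (m : ℝ) (hm : 0 < m) (ν : V3 → ℝ) (hνm : Measurable ν)
    (hν0 : ∀ v, 0 ≤ ν v)
    (hass : ∀ l : L5, l.2.2 < 0 → Integrable (fun v => ν v * expA m l v))
    (l₀ : L5) (hl₀ : l₀.2.2 < 0) :
    ContinuousAt (fun l : L5 => ∫ v, ν v * expA m l v) l₀ := by
  set r : ℝ := -l₀.2.2 / 8 with hrdef
  have hr : 0 < r := by rw [hrdef]; linarith
  set l' : L5 := (l₀.1 + 4*r, l₀.2.1, l₀.2.2 + 4*r) with hl'
  have hl'2 : l'.2.2 < 0 := by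
    show l₀.2.2 + 4*r < 0
    rw [hrdef]; linarith
  refine continuousAt_of_dominated ?_ ?_ (hass l' hl'2) ?_
  · exact Filter.Eventually.of_forall fun l =>
      ((hνm.mul (measurable_expA m l)).aestronglyMeasurable)
  · have hball : Metric.ball l₀ r ∈ 𝓝 l₀ := Metric.ball_mem_nhds l₀ hr
    refine Filter.eventually_of_mem hball fun l hl => ?_
    refine Filter.Eventually.of_forall fun v => ?_
    have hd : ‖l - l₀‖ < r := by
      rw [← dist_eq_norm]; exact hl
    have h1 : |l.1 - l₀.1| ≤ ‖l - l₀‖ := by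
      have := norm_fst_le (l - l₀); simpa using this
    have h2 : ∀ i, |l.2.1 i - l₀.2.1 i| ≤ ‖l - l₀‖ := by
      intro i
      have ha : ‖(l - l₀).2‖ ≤ ‖l - l₀‖ := norm_snd_le (l - l₀)
      have hb : ‖(l - l₀).2.1‖ ≤ ‖(l - l₀).2‖ := norm_fst_le (l - l₀).2
      have hc : ‖(l - l₀).2.1 i‖ ≤ ‖(l - l₀).2.1‖ := norm_le_pi_norm _ i
      have : |((l - l₀).2.1) i| ≤ ‖l-l₀‖ := by
        rw [← Real.norm_eq_abs]; linarith
      simpa using this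
    have h3 : |l.2.2 - l₀.2.2| ≤ ‖l - l₀‖ := by
      have ha : ‖(l - l₀).2‖ ≤ ‖l - l₀‖ := norm_snd_le (l - l₀)
      have hb : ‖(l - l₀).2.2‖ ≤ ‖(l - l₀).2‖ := norm_snd_le (l - l₀).2
      have : |((l - l₀).2.2)| ≤ ‖l-l₀‖ := by rw [← Real.norm_eq_abs]; linarith
      simpa using this
    have hsub : dot3 l.2.1 v - dot3 l₀.2.1 v = dot3 (l.2.1 - l₀.2.1) v := by
      unfold dot3
      rw [← Finset.sum_sub_distrib]
      exact Finset.sum_congr rfl fun i _ => by simp [sub_mul]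
    have hkey : dot5 l (aVec m v) ≤ dot5 l' (aVec m v) := by
      rw [dot5_aVec_eq, dot5_aVec_eq]
      refine mul_le_mul_of_nonneg_left ?_ hm.le
      have hdot : |dot3 (l.2.1 - l₀.2.1) v| ≤ 3 * r * (1 + nsq v) := by
        have hb := abs_dot3_le (l.2.1 - l₀.2.1) v
        have e0 := h2 0; have e1 := h2 1; have e2 := h2 2
        have hp := one_add_nsq_pos v
        simp only [Pi.sub_apply] at hb
        nlinarith [abs_nonneg (dot3 (l.2.1 - l₀.2.1) v)]
      have hl'1 : l'.1 = l₀.1 + 4*r := rfl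
      have hl'21 : l'.2.1 = l₀.2.1 := rfl
      have hl'22 : l'.2.2 = l₀.2.2 + 4*r := rfl
      rw [hl'1, hl'21, hl'22]
      have hA : l.1 ≤ l₀.1 + r := by
        have := abs_le.1 (h1.trans hd.le); linarith [this.2]
      have hB : dot3 l.2.1 v ≤ dot3 l₀.2.1 v + 3*r*(1+nsq v) := by
        have := abs_le.1 hdot
        linarith [this.2, hsub]
      have hC : l.2.2 * nsq v ≤ (l₀.2.2 + r) * nsq v := by
        have h3' := abs_le.1 (h3.trans hd.le)
        exact mul_le_mul_of_nonneg_right (by linarith [h3'.2]) (nsq_nonneg v)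
      nlinarith [nsq_nonneg v]
    have hnn : 0 ≤ ν v * expA m l' v := by
      have := Real.exp_pos (dot5 l' (aVec m v))
      have := hν0 v
      positivity
    rw [Real.norm_eq_abs, abs_of_nonneg (by
      have := Real.exp_pos (dot5 l (aVec m v)); have := hν0 v; positivity :
        (0:ℝ) ≤ ν v * expA m l v)]
    exact mul_le_mul_of_nonneg_left (Real.exp_le_exp.2 hkey) (hν0 v)
  · refine Filter.Eventually.of_forall fun v => ?_
    exact (continuous_const.mul
      (Real.continuous_exp.comp (continuous_dot5_left (aVec m v)))).continuousAt

end AuxInt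
section AuxSplit

lemma integrable_m_g {ν g : V3 → ℝ} (hνm : Measurable ν) (hgm : Measurable g)
    (hν0 : ∀ v, 0 ≤ ν v) (hg0 : ∀ v, 0 ≤ g v)
    (hνg : Integrable (fun v => ν v * (1 + nsq v) * g v)) (m : ℝ) :
    Integrable (fun v => m * ν v * g v) := by
  have := integrable_weighted hνm hgm hν0 hg0 hνg (w := fun _ => m)
    measurable_const (C := |m|) (fun v => by
      have := one_add_nsq_pos v
      calc |m| = |m| * 1 := by ring
        _ ≤ |m| * (1 + nsq v) := by
            refine mul_le_mul_of_nonneg_left ?_ (abs_nonneg m)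
            linarith [nsq_nonneg v])
  exact this.congr (Filter.Eventually.of_forall fun v => by ring)

lemma integrable_m_vi_g {ν g : V3 → ℝ} (hνm : Measurable ν) (hgm : Measurable g)
    (hν0 : ∀ v, 0 ≤ ν v) (hg0 : ∀ v, 0 ≤ g v)
    (hνg : Integrable (fun v => ν v * (1 + nsq v) * g v)) (m : ℝ) (i : Fin 3) :
    Integrable (fun v => m * ν v * v i * g v) := by
  have := integrable_weighted hνm hgm hν0 hg0 hνg (w := fun v => m * v i)
    (measurable_const.mul (measurable_pi_apply i)) (C := |m|) (fun v => by
      rw [abs_mul]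
      exact mul_le_mul_of_nonneg_left (abs_coord_le v i) (abs_nonneg m))
  exact this.congr (Filter.Eventually.of_forall fun v => by ring)

lemma integrable_m_nsq_g {ν g : V3 → ℝ} (hνm : Measurable ν) (hgm : Measurable g)
    (hν0 : ∀ v, 0 ≤ ν v) (hg0 : ∀ v, 0 ≤ g v)
    (hνg : Integrable (fun v => ν v * (1 + nsq v) * g v)) (m : ℝ) :
    Integrable (fun v => m * ν v * nsq v * g v) := by
  have hmeas : Measurable (nsq : V3 → ℝ) := by
    have : Continuous (nsq : V3 → ℝ) := by unfold nsq; fun_prop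
    exact this.measurable
  have := integrable_weighted hνm hgm hν0 hg0 hνg (w := fun v => m * nsq v)
    (measurable_const.mul hmeas) (C := |m|) (fun v => by
      rw [abs_mul]
      refine mul_le_mul_of_nonneg_left ?_ (abs_nonneg m)
      rw [abs_of_nonneg (nsq_nonneg v)]
      linarith [nsq_nonneg v])
  exact this.congr (Filter.Eventually.of_forall fun v => by ring)

lemma measurable_nsq : Measurable (nsq : V3 → ℝ) := by
  have : Continuous (nsq : V3 → ℝ) := by unfold nsq; fun_prop
  exact this.measurable

lemma integrable_poly_g {ν g : V3 → ℝ} (hνm : Measurable ν) (hgm : Measurable g)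
    (hν0 : ∀ v, 0 ≤ ν v) (hg0 : ∀ v, 0 ≤ g v)
    (hνg : Integrable (fun v => ν v * (1 + nsq v) * g v)) (c : L5) (m : ℝ) :
    Integrable (fun v => ν v * dot5 c (aVec m v) * g v) :=
  integrable_weighted hνm hgm hν0 hg0 hνg
    (w := fun v => dot5 c (aVec m v)) (continuous_dot5_aVec c m).measurable
    (C := KC c m) (abs_dot5_aVec_le c m)

lemma int_poly_split {ν g : V3 → ℝ} (hνm : Measurable ν) (hgm : Measurable g)
    (hν0 : ∀ v, 0 ≤ ν v) (hg0 : ∀ v, 0 ≤ g v)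
    (hνg : Integrable (fun v => ν v * (1 + nsq v) * g v)) (c : L5) (m : ℝ) :
    ∫ v, ν v * dot5 c (aVec m v) * g v
      = c.1 * (∫ v, m * ν v * g v)
        + (c.2.1 0 * (∫ v, m * ν v * v 0 * g v)
           + c.2.1 1 * (∫ v, m * ν v * v 1 * g v)
           + c.2.1 2 * (∫ v, m * ν v * v 2 * g v))
        + c.2.2 * (∫ v, m * ν v * nsq v * g v) := by
  have I0 := (integrable_m_g hνm hgm hν0 hg0 hνg m).const_mul c.1
  have Iv0 := (integrable_m_vi_g hνm hgm hν0 hg0 hνg m 0).const_mul (c.2.1 0)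
  have Iv1 := (integrable_m_vi_g hνm hgm hν0 hg0 hνg m 1).const_mul (c.2.1 1)
  have Iv2 := (integrable_m_vi_g hνm hgm hν0 hg0 hνg m 2).const_mul (c.2.1 2)
  have Iq := (integrable_m_nsq_g hνm hgm hν0 hg0 hνg m).const_mul c.2.2
  have heq : (fun v => ν v * dot5 c (aVec m v) * g v)
      = fun v => c.1 * (m * ν v * g v)
        + ((c.2.1 0 * (m * ν v * v 0 * g v) + c.2.1 1 * (m * ν v * v 1 * g v)
            + c.2.1 2 * (m * ν v * v 2 * g v))
          + c.2.2 * (m * ν v * nsq v * g v)) := by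
    funext v
    rw [dot5_aVec_eq]
    unfold dot3
    rw [Fin.sum_univ_three]
    ring
  have J01 : Integrable (fun x => c.2.1 0 * (m * ν x * x 0 * g x)
      + c.2.1 1 * (m * ν x * x 1 * g x)) volume := Iv0.add Iv1
  have J012 : Integrable (fun x => c.2.1 0 * (m * ν x * x 0 * g x)
      + c.2.1 1 * (m * ν x * x 1 * g x) + c.2.1 2 * (m * ν x * x 2 * g x)) volume := J01.add Iv2
  have J : Integrable (fun x => (c.2.1 0 * (m * ν x * x 0 * g x)
      + c.2.1 1 * (m * ν x * x 1 * g x) + c.2.1 2 * (m * ν x * x 2 * g x))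
      + c.2.2 * (m * ν x * nsq x * g x)) volume := J012.add Iq
  rw [heq, integral_add I0 J, integral_add J012 Iq, integral_add J01 Iv2,
    integral_add Iv0 Iv1, integral_const_mul, integral_const_mul, integral_const_mul,
    integral_const_mul, integral_const_mul]
  ring

lemma dot5_combo (a b : ℝ) (x y w : L5) :
    dot5 (a • x + b • y) w = a * dot5 x w + b * dot5 y w := by
  unfold dot5 dot3
  simp only [Prod.fst_add, Prod.snd_add, Prod.smul_fst, Prod.smul_snd, Pi.add_apply,
    Pi.smul_apply, smul_eq_mul, Fin.sum_univ_three]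
  ring

lemma dot6_combo (a b : ℝ) (x y w : L6) :
    dot6 (a • x + b • y) w = a * dot6 x w + b * dot6 y w := by
  unfold dot6 dot3
  simp only [Prod.fst_add, Prod.snd_add, Prod.smul_fst, Prod.smul_snd, Pi.add_apply,
    Pi.smul_apply, smul_eq_mul, Fin.sum_univ_three]
  ring

lemma comp1_combo (a b : ℝ) (x y : L6) :
    comp1 (a • x + b • y) = a • comp1 x + b • comp1 y := rfl

lemma comp2_combo (a b : ℝ) (x y : L6) :
    comp2 (a • x + b • y) = a • comp2 x + b • comp2 y := rfl

lemma comp_eq_imp (x y : L6) (h1 : comp1 x = comp1 y) (h2 : comp2 x = comp2 y) : x = y := by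
  have e1 : x.1 = y.1 := congrArg (fun p : L5 => p.1) h1
  have e2 : x.2.1 = y.2.1 := congrArg (fun p : L5 => p.1) h2
  have h1' := congrArg (fun p : L5 => p.2) h1
  have e3 : x.2.2.1 = y.2.2.1 := congrArg (fun q : V3 × ℝ => q.1) h1'
  have e4 : x.2.2.2 = y.2.2.2 := congrArg (fun q : V3 × ℝ => q.2) h1'
  exact Prod.ext e1 (Prod.ext e2 (Prod.ext e3 e4))

end AuxSplit
section AuxConvex

lemma convexU : Convex ℝ {l : L6 | l.2.2.2 < 0} := by
  intro x hx y hy a b ha hb hab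
  simp only [Set.mem_setOf_eq] at hx hy ⊢
  have he : (a • x + b • y).2.2.2 = a * x.2.2.2 + b * y.2.2.2 := rfl
  rw [he]
  rcases lt_or_eq_of_le ha with ha' | ha'
  · nlinarith
  · have hb1 : b = 1 := by linarith
    rw [← ha', hb1]; simpa using hy

lemma dot5_sub (c c' w : L5) : dot5 (c - c') w = dot5 c w - dot5 c' w := by
  unfold dot5 dot3
  simp only [Prod.fst_sub, Prod.snd_sub, Pi.sub_apply, Fin.sum_univ_three]
  ring

lemma combo_last (a b : ℝ) (c c' : L5) :
    (a • c + b • c').2.2 = a * c.2.2 + b * c'.2.2 := rfl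

lemma combo_last_neg {a b : ℝ} {c c' : L5} (ha : 0 ≤ a) (hb : 0 ≤ b) (hab : a + b = 1)
    (hc : c.2.2 < 0) (hc' : c'.2.2 < 0) : (a • c + b • c').2.2 < 0 := by
  rw [combo_last]
  rcases lt_or_eq_of_le ha with ha' | ha'
  · nlinarith
  · have hb1 : b = 1 := by linarith
    rw [← ha', hb1]; simpa using hc'

lemma pointwise_exp_convex (m : ℝ) {ν : V3 → ℝ} (hν0 : ∀ v, 0 ≤ ν v)
    (c c' : L5) {a b : ℝ} (ha : 0 ≤ a) (hb : 0 ≤ b) (hab : a + b = 1) (v : V3) :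
    ν v * expA m (a • c + b • c') v
      ≤ a * (ν v * expA m c v) + b * (ν v * expA m c' v) := by
  have hd : dot5 (a • c + b • c') (aVec m v)
      = a * dot5 c (aVec m v) + b * dot5 c' (aVec m v) := dot5_combo a b c c' _
  have hcx := convexOn_exp.2 (Set.mem_univ (dot5 c (aVec m v)))
    (Set.mem_univ (dot5 c' (aVec m v))) ha hb hab
  simp only [smul_eq_mul] at hcx
  unfold expA
  rw [hd]
  calc ν v * Real.exp (a * dot5 c (aVec m v) + b * dot5 c' (aVec m v))
      ≤ ν v * (a * Real.exp (dot5 c (aVec m v)) + b * Real.exp (dot5 c' (aVec m v))) :=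
        mul_le_mul_of_nonneg_left hcx (hν0 v)
    _ = _ := by ring

lemma conv_int_exp (m : ℝ) {ν : V3 → ℝ} (hν0 : ∀ v, 0 ≤ ν v)
    (hass : ∀ l : L5, l.2.2 < 0 → Integrable (fun v => ν v * expA m l v))
    (c c' : L5) (hc : c.2.2 < 0) (hc' : c'.2.2 < 0)
    {a b : ℝ} (ha : 0 ≤ a) (hb : 0 ≤ b) (hab : a + b = 1) :
    ∫ v, ν v * expA m (a • c + b • c') v
      ≤ a * (∫ v, ν v * expA m c v) + b * (∫ v, ν v * expA m c' v) := by
  have hcc := combo_last_neg ha hb hab hc hc'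
  have hI : Integrable (fun v => a * (ν v * expA m c v) + b * (ν v * expA m c' v)) volume :=
    ((hass c hc).const_mul a).add ((hass c' hc').const_mul b)
  calc ∫ v, ν v * expA m (a • c + b • c') v
      ≤ ∫ v, (a * (ν v * expA m c v) + b * (ν v * expA m c' v)) :=
        integral_mono (hass _ hcc) hI (fun v => pointwise_exp_convex m hν0 c c' ha hb hab v)
    _ = _ := by
        rw [integral_add ((hass c hc).const_mul a) ((hass c' hc').const_mul b),
          integral_const_mul, integral_const_mul]

lemma volume_univ_pos : 0 < volume (Set.univ : Set V3) := by
  have h := Metric.measure_ball_pos volume (0 : V3) one_pos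
  exact h.trans_le (measure_mono (Set.subset_univ _))

lemma strict_int_exp (m : ℝ) (hm : 0 < m) {ν : V3 → ℝ} (hνm : Measurable ν)
    (hνpos : ∀ v, 0 < ν v)
    (hass : ∀ l : L5, l.2.2 < 0 → Integrable (fun v => ν v * expA m l v))
    (c c' : L5) (hc : c.2.2 < 0) (hc' : c'.2.2 < 0) (hne : c ≠ c')
    {a b : ℝ} (ha : 0 < a) (hb : 0 < b) (hab : a + b = 1) :
    ∫ v, ν v * expA m (a • c + b • c') v
      < a * (∫ v, ν v * expA m c v) + b * (∫ v, ν v * expA m c' v) := by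
  have hcc := combo_last_neg ha.le hb.le hab hc hc'
  set h : V3 → ℝ := fun v => a * (ν v * expA m c v) + b * (ν v * expA m c' v)
    - ν v * expA m (a • c + b • c') v with hh
  have hint : Integrable h volume :=
    (((hass c hc).const_mul a).add ((hass c' hc').const_mul b)).sub (hass _ hcc)
  have hnonneg : ∀ v, 0 ≤ h v := fun v =>
    sub_nonneg.2 (pointwise_exp_convex m (fun v => (hνpos v).le) c c' ha.le hb.le hab v)
  -- the coincidence set is null
  have hδ : c - c' ≠ 0 := sub_ne_zero.2 hne
  have hNnull : volume {v : V3 | dot5 c (aVec m v) = dot5 c' (aVec m v)} = 0 := by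
    have hseteq : {v : V3 | dot5 c (aVec m v) = dot5 c' (aVec m v)}
        = {v : V3 | (c - c').1 + dot3 (c - c').2.1 v + (c - c').2.2 * nsq v = 0} := by
      ext v
      simp only [Set.mem_setOf_eq]
      rw [← sub_eq_zero, ← dot5_sub, dot5_aVec_eq]
      constructor
      · intro hzero
        rcases mul_eq_zero.1 hzero with h0 | h0
        · exact absurd h0 hm.ne'
        · exact h0
      · intro hzero; rw [hzero, mul_zero]
    rw [hseteq]
    exact poly_null _ hδ
  have hpos_off : ∀ v, dot5 c (aVec m v) ≠ dot5 c' (aVec m v) → 0 < h v := by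
    intro v hvne
    have hstrict := strictConvexOn_exp.2 (Set.mem_univ (dot5 c (aVec m v)))
      (Set.mem_univ (dot5 c' (aVec m v))) hvne ha hb hab
    simp only [smul_eq_mul] at hstrict
    have hd : dot5 (a • c + b • c') (aVec m v)
        = a * dot5 c (aVec m v) + b * dot5 c' (aVec m v) := dot5_combo a b c c' _
    have : ν v * expA m (a • c + b • c') v
        < a * (ν v * expA m c v) + b * (ν v * expA m c' v) := by
      unfold expA
      rw [hd]
      calc ν v * Real.exp (a * dot5 c (aVec m v) + b * dot5 c' (aVec m v))
          < ν v * (a * Real.exp (dot5 c (aVec m v)) + b * Real.exp (dot5 c' (aVec m v))) :=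
            mul_lt_mul_of_pos_left hstrict (hνpos v)
        _ = _ := by ring
    rw [hh]
    dsimp only
    linarith
  have hsupp : 0 < volume (Function.support h) := by
    have hsub : {v : V3 | dot5 c (aVec m v) = dot5 c' (aVec m v)}ᶜ ⊆ Function.support h := by
      intro v hv
      exact fun h0 => absurd h0 (ne_of_gt (hpos_off v hv))
    by_contra h0
    push_neg at h0
    have h0' : volume (Function.support h) = 0 := le_antisymm h0 zero_le
    have hcompl : volume ({v : V3 | dot5 c (aVec m v) = dot5 c' (aVec m v)}ᶜ) = 0 :=
      measure_mono_null hsub h0'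
    have : volume (Set.univ : Set V3) = 0 := by
      have := measure_union_le (μ := volume)
        {v : V3 | dot5 c (aVec m v) = dot5 c' (aVec m v)}
        {v : V3 | dot5 c (aVec m v) = dot5 c' (aVec m v)}ᶜ
      rw [Set.union_compl_self, hNnull, hcompl] at this
      simpa using this
    exact absurd this (ne_of_gt volume_univ_pos)
  have hintpos : 0 < ∫ v, h v := by
    rw [integral_pos_iff_support_of_nonneg_ae (Filter.Eventually.of_forall hnonneg) hint]
    exact hsupp
  have hsplit : ∫ v, h v = (a * (∫ v, ν v * expA m c v) + b * (∫ v, ν v * expA m c' v))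
      - ∫ v, ν v * expA m (a • c + b • c') v := by
    have hsum : Integrable (fun v => a * (ν v * expA m c v) + b * (ν v * expA m c' v))
        volume := ((hass c hc).const_mul a).add ((hass c' hc').const_mul b)
    simp only [hh]
    rw [integral_sub hsum (hass _ hcc),
      integral_add ((hass c hc).const_mul a) ((hass c' hc').const_mul b),
      integral_const_mul, integral_const_mul]
  rw [hsplit] at hintpos
  linarith

end AuxConvex
section AuxZbar

lemma zbar_strictConvexOn (m₁ m₂ : ℝ) (hm₁ : 0 < m₁) (hm₂ : 0 < m₂)
    (ν₁₂ ν₂₁ : V3 → ℝ) (hν₁₂meas : Measurable ν₁₂) (hν₂₁meas : Measurable ν₂₁)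
    (hν₁₂pos : ∀ v, 0 < ν₁₂ v) (hν₂₁pos : ∀ v, 0 < ν₂₁ v)
    (hass₁ : ∀ l : L5, l.2.2 < 0 → Integrable (fun v => ν₁₂ v * expA m₁ l v))
    (hass₂ : ∀ l : L5, l.2.2 < 0 → Integrable (fun v => ν₂₁ v * expA m₂ l v))
    (ρ : L6) :
    StrictConvexOn ℝ {l : L6 | l.2.2.2 < 0} (fun l => zbar m₁ m₂ ν₁₂ ν₂₁ l ρ) := by
  refine ⟨convexU, ?_⟩
  intro x hx y hy hxy a b ha hb hab
  simp only [Set.mem_setOf_eq] at hx hy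
  have hc1x : (comp1 x).2.2 < 0 := hx
  have hc1y : (comp1 y).2.2 < 0 := hy
  have hc2x : (comp2 x).2.2 < 0 := hx
  have hc2y : (comp2 y).2.2 < 0 := hy
  simp only [zbar, PhiMix, smul_eq_mul]
  rw [dot6_combo, comp1_combo, comp2_combo]
  rcases eq_or_ne (comp1 x) (comp1 y) with h1 | h1
  · have h2 : comp2 x ≠ comp2 y := fun h2 => hxy (comp_eq_imp x y h1 h2)
    have hstrict := strict_int_exp m₂ hm₂ hν₂₁meas hν₂₁pos hass₂ (comp2 x) (comp2 y)
      hc2x hc2y h2 ha hb hab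
    rw [h1]
    have he : a • comp1 y + b • comp1 y = comp1 y := by
      rw [← add_smul, hab, one_smul]
    rw [he]
    have hT : a * (∫ v, ν₁₂ v * expA m₁ (comp1 y) v)
        + b * (∫ v, ν₁₂ v * expA m₁ (comp1 y) v)
        = ∫ v, ν₁₂ v * expA m₁ (comp1 y) v := by
      rw [← add_mul, hab, one_mul]
    linarith
  · have hstrict := strict_int_exp m₁ hm₁ hν₁₂meas hν₁₂pos hass₁ (comp1 x) (comp1 y)
      hc1x hc1y h1 ha hb hab
    have hle := conv_int_exp m₂ (fun v => (hν₂₁pos v).le) hass₂ (comp2 x) (comp2 y)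
      hc2x hc2y ha.le hb.le hab
    linarith

end AuxZbar
section AuxCoerc

lemma continuous_comp1 : Continuous comp1 := by
  unfold comp1; fun_prop

lemma continuous_comp2 : Continuous comp2 := by
  unfold comp2; fun_prop

lemma continuous_dot6_left (w : L6) : Continuous fun l : L6 => dot6 l w := by
  unfold dot6 dot3; fun_prop

lemma dot5_add_smul (x y w : L5) (t : ℝ) :
    dot5 (x + t • y) w = dot5 x w + t * dot5 y w := by
  unfold dot5 dot3
  simp only [Prod.fst_add, Prod.snd_add, Prod.smul_fst, Prod.smul_snd, Pi.add_apply,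
    Pi.smul_apply, smul_eq_mul, Fin.sum_univ_three]
  ring

lemma dot6_add_smul (x y w : L6) (t : ℝ) :
    dot6 (x + t • y) w = dot6 x w + t * dot6 y w := by
  unfold dot6 dot3
  simp only [Prod.fst_add, Prod.snd_add, Prod.smul_fst, Prod.smul_snd, Pi.add_apply,
    Pi.smul_apply, smul_eq_mul, Fin.sum_univ_three]
  ring

lemma comp1_add_smul (x y : L6) (t : ℝ) :
    comp1 (x + t • y) = comp1 x + t • comp1 y := rfl

lemma comp2_add_smul (x y : L6) (t : ℝ) :
    comp2 (x + t • y) = comp2 x + t • comp2 y := rfl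

lemma int_exp_nonneg (m : ℝ) {ν : V3 → ℝ} (hν0 : ∀ v, 0 ≤ ν v) (c : L5) :
    0 ≤ ∫ v, ν v * expA m c v :=
  integral_nonneg fun v => mul_nonneg (hν0 v) (Real.exp_pos _).le

lemma continuousAt_zbarF (m₁ m₂ : ℝ) (hm₁ : 0 < m₁) (hm₂ : 0 < m₂)
    {ν₁₂ ν₂₁ : V3 → ℝ} (hν₁₂meas : Measurable ν₁₂) (hν₂₁meas : Measurable ν₂₁)
    (hν₁₂pos : ∀ v, 0 ≤ ν₁₂ v) (hν₂₁pos : ∀ v, 0 ≤ ν₂₁ v)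
    (hass₁ : ∀ l : L5, l.2.2 < 0 → Integrable (fun v => ν₁₂ v * expA m₁ l v))
    (hass₂ : ∀ l : L5, l.2.2 < 0 → Integrable (fun v => ν₂₁ v * expA m₂ l v))
    (ρ : L6) (x : L6) (hx : x.2.2.2 < 0) :
    ContinuousAt (fun l => zbar m₁ m₂ ν₁₂ ν₂₁ l ρ) x := by
  have h1 : ContinuousAt (fun l : L6 => ∫ v, ν₁₂ v * expA m₁ (comp1 l) v) x := by
    have := (contAt_int_exp m₁ hm₁ ν₁₂ hν₁₂meas hν₁₂pos hass₁ (comp1 x) hx).comp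
      continuous_comp1.continuousAt
    exact this
  have h2 : ContinuousAt (fun l : L6 => ∫ v, ν₂₁ v * expA m₂ (comp2 l) v) x := by
    have := (contAt_int_exp m₂ hm₂ ν₂₁ hν₂₁meas hν₂₁pos hass₂ (comp2 x) hx).comp
      continuous_comp2.continuousAt
    exact this
  have h3 : ContinuousAt (fun l : L6 => dot6 l ρ) x := (continuous_dot6_left ρ).continuousAt
  exact ((h1.add h2).sub h3)

lemma dot6_muBar (m₁ m₂ : ℝ) {ν₁₂ ν₂₁ f₁ f₂ : V3 → ℝ}
    (hν₁₂meas : Measurable ν₁₂) (hν₂₁meas : Measurable ν₂₁)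
    (hν₁₂pos : ∀ v, 0 ≤ ν₁₂ v) (hν₂₁pos : ∀ v, 0 ≤ ν₂₁ v)
    (hf₁meas : Measurable f₁) (hf₂meas : Measurable f₂)
    (hf₁0 : ∀ v, 0 ≤ f₁ v) (hf₂0 : ∀ v, 0 ≤ f₂ v)
    (hf₁int : Integrable (fun v => ν₁₂ v * (1 + nsq v) * f₁ v))
    (hf₂int : Integrable (fun v => ν₂₁ v * (1 + nsq v) * f₂ v)) (u : L6) :
    dot6 u (muBar m₁ m₂ ν₁₂ ν₂₁ f₁ f₂)
      = (∫ v, ν₁₂ v * dot5 (comp1 u) (aVec m₁ v) * f₁ v)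
        + ∫ v, ν₂₁ v * dot5 (comp2 u) (aVec m₂ v) * f₂ v := by
  rw [int_poly_split hν₁₂meas hf₁meas hν₁₂pos hf₁0 hf₁int (comp1 u) m₁,
    int_poly_split hν₂₁meas hf₂meas hν₂₁pos hf₂0 hf₂int (comp2 u) m₂]
  unfold dot6 muBar dot3 comp1 comp2
  simp only [Fin.sum_univ_three]
  ring

end AuxCoerc
section AuxRay1

lemma ae_nonpos_of_exp_bound (m : ℝ) (hm : 0 < m) {ν : V3 → ℝ} (hνm : Measurable ν)
    (hνpos : ∀ v, 0 < ν v) (c₀ cu : L5)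
    (hint : Integrable (fun v => ν v * expA m c₀ v))
    {B₀ B₁ : ℝ}
    (hbound : ∀ t : ℝ, 0 ≤ t → (∫ v, ν v * expA m (c₀ + t • cu) v) ≤ B₀ + t * B₁)
    (hIble : ∀ t : ℝ, 0 ≤ t → Integrable (fun v => ν v * expA m (c₀ + t • cu) v)) :
    ∀ᵐ v, dot5 cu (aVec m v) ≤ 0 := by
  set p : V3 → ℝ := fun v => dot5 cu (aVec m v) with hp
  have hpcont : Continuous p := continuous_dot5_aVec cu m
  by_contra hcon
  rw [MeasureTheory.ae_iff] at hcon
  simp only [not_le] at hcon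
  have hApos : 0 < volume {v : V3 | 0 < p v} := by
    rcases (show (0:ENNReal) ≤ volume {v : V3 | 0 < p v} from zero_le).lt_or_eq with h | h
    · exact h
    · exact absurd h.symm hcon
  -- find a level set with positive measure
  have hcover : {v : V3 | 0 < p v} ⊆ ⋃ n : ℕ, {v : V3 | 1/((n:ℝ)+1) ≤ p v} := by
    intro v hv
    simp only [Set.mem_setOf_eq] at hv
    obtain ⟨n, hn⟩ := exists_nat_gt (1 / p v)
    refine Set.mem_iUnion.2 ⟨n, ?_⟩
    simp only [Set.mem_setOf_eq]
    rw [div_le_iff₀ (by positivity)]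
    rw [div_lt_iff₀ hv] at hn
    nlinarith
  have hex : ∃ n : ℕ, 0 < volume {v : V3 | 1/((n:ℝ)+1) ≤ p v} := by
    by_contra hno
    push_neg at hno
    have : ∀ n : ℕ, volume {v : V3 | 1/((n:ℝ)+1) ≤ p v} = 0 :=
      fun n => le_antisymm (hno n) zero_le
    have := measure_mono_null hcover (measure_iUnion_null this)
    exact absurd this (ne_of_gt hApos)
  obtain ⟨n, hn⟩ := hex
  set ε : ℝ := 1/((n:ℝ)+1) with hε
  have hεpos : 0 < ε := by rw [hε]; positivity
  -- intersect with a ball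
  have hcover2 : {v : V3 | ε ≤ p v} ⊆
      ⋃ k : ℕ, ({v : V3 | ε ≤ p v} ∩ Metric.ball (0:V3) ((k:ℝ)+1)) := by
    intro v hv
    obtain ⟨k, hk⟩ := exists_nat_gt ‖v‖
    refine Set.mem_iUnion.2 ⟨k, hv, ?_⟩
    rw [Metric.mem_ball, dist_zero_right]
    linarith
  have hex2 : ∃ k : ℕ, 0 < volume ({v : V3 | ε ≤ p v} ∩ Metric.ball (0:V3) ((k:ℝ)+1)) := by
    by_contra hno
    push_neg at hno
    have : ∀ k : ℕ, volume ({v : V3 | ε ≤ p v} ∩ Metric.ball (0:V3) ((k:ℝ)+1)) = 0 :=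
      fun k => le_antisymm (hno k) zero_le
    have := measure_mono_null hcover2 (measure_iUnion_null this)
    exact absurd this (ne_of_gt hn)
  obtain ⟨k, hk⟩ := hex2
  set B : Set V3 := {v : V3 | ε ≤ p v} ∩ Metric.ball (0:V3) ((k:ℝ)+1) with hB
  have hBmeas : MeasurableSet B := by
    refine MeasurableSet.inter ?_ measurableSet_ball
    exact (isClosed_le continuous_const hpcont).measurableSet
  have hBlt : volume B < ⊤ :=
    lt_of_le_of_lt (measure_mono Set.inter_subset_right) measure_ball_lt_top
  -- the base integral over B is positive
  set w : V3 → ℝ := fun v => ν v * expA m c₀ v with hw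
  have hwpos : ∀ v, 0 < w v := fun v => mul_pos (hνpos v) (Real.exp_pos _)
  have hcpos : 0 < ∫ v in B, w v := by
    rw [setIntegral_pos_iff_support_of_nonneg_ae
      (Filter.Eventually.of_forall fun v => (hwpos v).le) (hint.integrableOn)]
    have : Function.support w ∩ B = B := by
      refine Set.inter_eq_self_of_subset_right fun v _ => ?_
      exact (hwpos v).ne'
    rw [this]
    exact hk
  set c : ℝ := ∫ v in B, w v with hc
  -- growth estimate
  have hgrow : ∀ t : ℝ, 0 ≤ t → c * Real.exp (t * ε) ≤ B₀ + t * B₁ := by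
    intro t ht
    have hptwise : ∀ v ∈ B, w v * Real.exp (t * ε) ≤ ν v * expA m (c₀ + t • cu) v := by
      intro v hv
      have hvp : ε ≤ p v := hv.1
      have he : expA m (c₀ + t • cu) v = expA m c₀ v * Real.exp (t * p v) := by
        unfold expA
        rw [dot5_add_smul, Real.exp_add]
      rw [he, hw]
      have h1 : Real.exp (t * ε) ≤ Real.exp (t * p v) :=
        Real.exp_le_exp.2 (mul_le_mul_of_nonneg_left hvp ht)
      calc ν v * expA m c₀ v * Real.exp (t * ε)
          ≤ ν v * expA m c₀ v * Real.exp (t * p v) :=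
            mul_le_mul_of_nonneg_left h1 (mul_pos (hνpos v) (Real.exp_pos _)).le
        _ = ν v * (expA m c₀ v * Real.exp (t * p v)) := by ring
    have step1 : c * Real.exp (t * ε) = ∫ v in B, w v * Real.exp (t * ε) := by
      rw [integral_mul_const]
    have step2 : (∫ v in B, w v * Real.exp (t * ε))
        ≤ ∫ v in B, ν v * expA m (c₀ + t • cu) v := by
      refine setIntegral_mono_on ?_ ?_ hBmeas hptwise
      · exact (hint.mul_const _).integrableOn
      · exact (hIble t ht).integrableOn
    have step3 : (∫ v in B, ν v * expA m (c₀ + t • cu) v)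
        ≤ ∫ v, ν v * expA m (c₀ + t • cu) v := by
      refine setIntegral_le_integral (hIble t ht) ?_
      exact Filter.Eventually.of_forall fun v =>
        mul_nonneg (hνpos v).le (Real.exp_pos _).le
    calc c * Real.exp (t * ε) = _ := step1
      _ ≤ _ := step2
      _ ≤ _ := step3
      _ ≤ B₀ + t * B₁ := hbound t ht
  -- contradiction: exponential beats linear
  have hKpos : (0:ℝ) < (|B₀| + |B₁|/ε + 1) / c := by positivity
  have hev : ∀ᶠ s : ℝ in atTop, ((|B₀| + |B₁|/ε + 1) / c) ≤ Real.exp s / s ^ 1 :=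
    (Real.tendsto_exp_div_pow_atTop 1).eventually_ge_atTop _
  have hev2 : ∀ᶠ s : ℝ in atTop, (1:ℝ) ≤ s := eventually_ge_atTop 1
  obtain ⟨s, hs1, hs2⟩ := (hev.and hev2).exists
  have hspos : 0 < s := lt_of_lt_of_le one_pos hs2
  set t : ℝ := s / ε with htdef
  have ht0 : 0 ≤ t := by positivity
  have htε : t * ε = s := by rw [htdef]; field_simp
  have hexp : ((|B₀| + |B₁|/ε + 1) / c) * s ≤ Real.exp s := by
    rw [pow_one] at hs1
    exact (le_div_iff₀ hspos).1 hs1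
  have hfin : B₀ + t * B₁ < c * Real.exp (t * ε) := by
    rw [htε]
    have hcexp : (|B₀| + |B₁|/ε + 1) * s ≤ c * Real.exp s := by
      have := mul_le_mul_of_nonneg_left hexp hcpos.le
      calc (|B₀| + |B₁|/ε + 1) * s = c * (((|B₀| + |B₁|/ε + 1) / c) * s) := by
            field_simp
        _ ≤ c * Real.exp s := this
    have e1 : |B₀| * s ≥ |B₀| := le_mul_of_one_le_right (abs_nonneg _) hs2
    have e2 : (|B₁|/ε) * s = |B₁| * t := by rw [htdef]; ring
    have e3 : B₀ ≤ |B₀| := le_abs_self _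
    have e4 : t * B₁ ≤ t * |B₁| := mul_le_mul_of_nonneg_left (le_abs_self _) ht0
    nlinarith
  exact absurd (hgrow t ht0) (not_le.2 hfin)

end AuxRay1
section AuxRay2

lemma dot5_aVec_zero_null (m : ℝ) (hm : 0 < m) (c : L5) (hc : c ≠ 0) :
    volume {v : V3 | dot5 c (aVec m v) = 0} = 0 := by
  have hseteq : {v : V3 | dot5 c (aVec m v) = 0}
      = {v : V3 | c.1 + dot3 c.2.1 v + c.2.2 * nsq v = 0} := by
    ext v
    simp only [Set.mem_setOf_eq]
    rw [dot5_aVec_eq]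
    constructor
    · intro hzero
      rcases mul_eq_zero.1 hzero with h0 | h0
      · exact absurd h0 hm.ne'
      · exact h0
    · intro hzero; rw [hzero, mul_zero]
  rw [hseteq]
  exact poly_null _ hc

lemma sublevel_norm_bound
    (m₁ m₂ : ℝ) (hm₁ : 0 < m₁) (hm₂ : 0 < m₂)
    (ν₁₂ ν₂₁ : V3 → ℝ) (hν₁₂meas : Measurable ν₁₂) (hν₂₁meas : Measurable ν₂₁)
    (hν₁₂pos : ∀ v, 0 < ν₁₂ v) (hν₂₁pos : ∀ v, 0 < ν₂₁ v)
    (hass₁ : ∀ l : L5, l.2.2 < 0 → Integrable (fun v => ν₁₂ v * expA m₁ l v))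
    (hass₂ : ∀ l : L5, l.2.2 < 0 → Integrable (fun v => ν₂₁ v * expA m₂ l v))
    (f₁ f₂ : V3 → ℝ) (hf₁meas : Measurable f₁) (hf₂meas : Measurable f₂)
    (hf₁0 : ∀ v, 0 ≤ f₁ v) (hf₂0 : ∀ v, 0 ≤ f₂ v)
    (hf₁ne : ¬ f₁ =ᵐ[volume] (fun _ => (0 : ℝ)))
    (hf₂ne : ¬ f₂ =ᵐ[volume] (fun _ => (0 : ℝ)))
    (hf₁int : Integrable (fun v => ν₁₂ v * (1 + nsq v) * f₁ v))
    (hf₂int : Integrable (fun v => ν₂₁ v * (1 + nsq v) * f₂ v))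
    (M : ℝ) :
    ∃ R : ℝ, ∀ l : L6, l.2.2.2 < 0 →
      zbar m₁ m₂ ν₁₂ ν₂₁ l (muBar m₁ m₂ ν₁₂ ν₂₁ f₁ f₂) ≤ M → ‖l‖ ≤ R := by
  set ρ : L6 := muBar m₁ m₂ ν₁₂ ν₂₁ f₁ f₂ with hρ
  set F : L6 → ℝ := fun l => zbar m₁ m₂ ν₁₂ ν₂₁ l ρ with hFdef
  by_contra hcon
  push_neg at hcon
  set l₀ : L6 := (0, 0, 0, -1) with hl₀def
  have hl₀ : l₀.2.2.2 < 0 := by norm_num [hl₀def]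
  choose g hg1 hg2 hg3 using hcon
  set l : ℕ → L6 := fun n => g ((n:ℝ) + ‖l₀‖ + 1) with hldef
  have hlU : ∀ n : ℕ, (l n).2.2.2 < 0 := fun n => hg1 _
  have hlF : ∀ n : ℕ, F (l n) ≤ M := fun n => hg2 _
  have hlnorm : ∀ n : ℕ, (n:ℝ) + ‖l₀‖ + 1 < ‖l n‖ := fun n => hg3 ((n:ℝ) + ‖l₀‖ + 1)
  set T : ℕ → ℝ := fun n => ‖l n - l₀‖ with hTdef
  have hT : ∀ n : ℕ, (n:ℝ) + 1 < T n := by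
    intro n
    have h1 : ‖l n‖ - ‖l₀‖ ≤ ‖l n - l₀‖ := norm_sub_norm_le _ _
    have := hlnorm n
    show (n:ℝ) + 1 < ‖l n - l₀‖
    linarith
  have hTpos : ∀ n : ℕ, 0 < T n := by
    intro n
    have := hT n
    have : (0:ℝ) ≤ (n:ℝ) := Nat.cast_nonneg n
    linarith [hT n]
  set u : ℕ → L6 := fun n => (T n)⁻¹ • (l n - l₀) with hudef
  have hu : ∀ n : ℕ, u n ∈ Metric.sphere (0:L6) 1 := by
    intro n
    rw [Metric.mem_sphere, dist_zero_right]
    show ‖(T n)⁻¹ • (l n - l₀)‖ = 1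
    rw [norm_smul, Real.norm_eq_abs, abs_inv, abs_of_pos (hTpos n)]
    exact inv_mul_cancel₀ (hTpos n).ne'
  obtain ⟨ubar, humem, φ, hφ, hulim⟩ := (isCompact_sphere (0:L6) 1).tendsto_subseq hu
  have hunorm : ‖ubar‖ = 1 := by rwa [Metric.mem_sphere, dist_zero_right] at humem
  have hproj : Continuous fun w : L6 => w.2.2.2 := by fun_prop
  -- the limit direction has nonpositive last coordinate
  have hu2 : ubar.2.2.2 ≤ 0 := by
    have hlim2 : Tendsto (fun n => (u (φ n)).2.2.2) atTop (𝓝 ubar.2.2.2) :=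
      (hproj.tendsto ubar).comp hulim
    have hl₀2 : (0:ℝ) ≤ -l₀.2.2.2 := by norm_num [hl₀def]
    have hbnd : ∀ n : ℕ, (u (φ n)).2.2.2 ≤ (1/((n:ℝ)+1)) * (-l₀.2.2.2) := by
      intro n
      have hk := hTpos (φ n)
      have h1 : (u (φ n)).2.2.2 = (T (φ n))⁻¹ * ((l (φ n)).2.2.2 - l₀.2.2.2) := rfl
      have h2 : (l (φ n)).2.2.2 - l₀.2.2.2 ≤ -l₀.2.2.2 := by linarith [hlU (φ n)]
      have h3 : (T (φ n))⁻¹ ≤ 1/((n:ℝ)+1) := by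
        rw [one_div]
        apply inv_anti₀ (by positivity)
        have hφn : (n:ℝ) ≤ (φ n : ℝ) := by exact_mod_cast hφ.le_apply
        linarith [hT (φ n)]
      calc (u (φ n)).2.2.2 ≤ (T (φ n))⁻¹ * (-l₀.2.2.2) := by
            rw [h1]; exact mul_le_mul_of_nonneg_left h2 (inv_nonneg.2 hk.le)
        _ ≤ (1/((n:ℝ)+1)) * (-l₀.2.2.2) := mul_le_mul_of_nonneg_right h3 hl₀2
    have hzero : Tendsto (fun n : ℕ => (1/((n:ℝ)+1)) * (-l₀.2.2.2)) atTop (𝓝 0) := by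
      have := tendsto_one_div_add_atTop_nhds_zero_nat.mul_const (-l₀.2.2.2)
      simpa using this
    exact le_of_tendsto_of_tendsto' hlim2 hzero hbnd
  -- the ray stays in the domain
  have hrayU : ∀ t : ℝ, 0 ≤ t → (l₀ + t • ubar).2.2.2 < 0 := by
    intro t ht
    have he : (l₀ + t • ubar).2.2.2 = l₀.2.2.2 + t * ubar.2.2.2 := rfl
    rw [he]
    have := mul_nonneg ht (neg_nonneg.2 hu2)
    have hl₀2 : l₀.2.2.2 = -1 := rfl
    nlinarith
  have hconv := (zbar_strictConvexOn m₁ m₂ hm₁ hm₂ ν₁₂ ν₂₁ hν₁₂meas hν₂₁meas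
    hν₁₂pos hν₂₁pos hass₁ hass₂ ρ).convexOn
  set M' : ℝ := max M (F l₀) with hM'
  -- F is bounded along the limit ray
  have hray : ∀ t : ℝ, 0 ≤ t → F (l₀ + t • ubar) ≤ M' := by
    intro t ht
    have hev : ∀ᶠ n in atTop, F (l₀ + t • u (φ n)) ≤ M' := by
      filter_upwards [eventually_ge_atTop ⌈t⌉₊] with n hn
      have htle : t ≤ T (φ n) := by
        have h1 : t ≤ (n:ℝ) := le_trans (Nat.le_ceil t) (by exact_mod_cast hn)
        have h2 : (n:ℝ) ≤ (φ n : ℝ) := by exact_mod_cast hφ.le_apply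
        linarith [hT (φ n)]
      set k := φ n with hk
      set s : ℝ := t / T k with hs
      have hs0 : 0 ≤ s := div_nonneg ht (hTpos k).le
      have hs1 : s ≤ 1 := by rw [hs, div_le_one (hTpos k)]; exact htle
      have hcomb : l₀ + t • u k = (1-s) • l₀ + s • l k := by
        have h1 : t • u k = s • (l k - l₀) := by
          show t • ((T k)⁻¹ • (l k - l₀)) = s • (l k - l₀)
          rw [smul_smul, hs, div_eq_mul_inv]
        rw [h1, smul_sub, sub_smul, one_smul]
        abel
      rw [hcomb]
      have hmem0 : l₀ ∈ {w : L6 | w.2.2.2 < 0} := hl₀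
      have hmemk : l k ∈ {w : L6 | w.2.2.2 < 0} := hlU k
      have hcx := hconv.2 hmem0 hmemk (by linarith : (0:ℝ) ≤ 1 - s) hs0 (by ring)
      have hFk : F (l k) ≤ M' := le_trans (hlF k) (le_max_left _ _)
      have hF0 : F l₀ ≤ M' := le_max_right _ _
      calc F ((1-s) • l₀ + s • l k) ≤ (1-s) * F l₀ + s * F (l k) := by
            simpa [smul_eq_mul] using hcx
        _ ≤ (1-s) * M' + s * M' :=
            add_le_add (mul_le_mul_of_nonneg_left hF0 (by linarith))
              (mul_le_mul_of_nonneg_left hFk hs0)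
        _ = M' := by ring
    have hcont := continuousAt_zbarF m₁ m₂ hm₁ hm₂ hν₁₂meas hν₂₁meas
      (fun v => (hν₁₂pos v).le) (fun v => (hν₂₁pos v).le) hass₁ hass₂ ρ
      (l₀ + t • ubar) (hrayU t ht)
    have htends : Tendsto (fun n => l₀ + t • u (φ n)) atTop (𝓝 (l₀ + t • ubar)) :=
      tendsto_const_nhds.add (hulim.const_smul t)
    exact le_of_tendsto (hcont.tendsto.comp htends) hev
  -- bounds on the two exponential integrals along the ray
  set C₀ : ℝ := |dot6 l₀ ρ| with hC₀
  set C₁ : ℝ := |dot6 ubar ρ| with hC₁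
  have habs : ∀ t : ℝ, 0 ≤ t → dot6 (l₀ + t • ubar) ρ ≤ C₀ + t * C₁ := by
    intro t ht
    rw [dot6_add_smul]
    have h1 := le_abs_self (dot6 l₀ ρ)
    have h2 := le_abs_self (dot6 ubar ρ)
    nlinarith
  have hIbound₁ : ∀ t : ℝ, 0 ≤ t →
      (∫ v, ν₁₂ v * expA m₁ (comp1 l₀ + t • comp1 ubar) v) ≤ (M' + C₀) + t * C₁ := by
    intro t ht
    have h := hray t ht
    have hI2 := int_exp_nonneg m₂ (fun v => (hν₂₁pos v).le) (comp2 (l₀ + t • ubar))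
    have hc1 : comp1 (l₀ + t • ubar) = comp1 l₀ + t • comp1 ubar := rfl
    have habs' := habs t ht
    rw [hFdef] at h
    simp only [zbar, PhiMix, hc1] at h
    linarith
  have hIbound₂ : ∀ t : ℝ, 0 ≤ t →
      (∫ v, ν₂₁ v * expA m₂ (comp2 l₀ + t • comp2 ubar) v) ≤ (M' + C₀) + t * C₁ := by
    intro t ht
    have h := hray t ht
    have hI1 := int_exp_nonneg m₁ (fun v => (hν₁₂pos v).le) (comp1 (l₀ + t • ubar))
    have hc2 : comp2 (l₀ + t • ubar) = comp2 l₀ + t • comp2 ubar := rfl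
    have habs' := habs t ht
    rw [hFdef] at h
    simp only [zbar, PhiMix, hc2] at h
    linarith
  have hside₁ : ∀ t : ℝ, 0 ≤ t → (comp1 l₀ + t • comp1 ubar).2.2 < 0 := by
    intro t ht
    exact hrayU t ht
  have hside₂ : ∀ t : ℝ, 0 ≤ t → (comp2 l₀ + t • comp2 ubar).2.2 < 0 := by
    intro t ht
    exact hrayU t ht
  have hc1₀ : (comp1 l₀).2.2 < 0 := hl₀
  have hc2₀ : (comp2 l₀).2.2 < 0 := hl₀
  -- the direction polynomials are a.e. nonpositive
  have hp₁ : ∀ᵐ v, dot5 (comp1 ubar) (aVec m₁ v) ≤ 0 :=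
    ae_nonpos_of_exp_bound m₁ hm₁ hν₁₂meas hν₁₂pos (comp1 l₀) (comp1 ubar)
      (hass₁ _ hc1₀) hIbound₁ (fun t ht => hass₁ _ (hside₁ t ht))
  have hp₂ : ∀ᵐ v, dot5 (comp2 ubar) (aVec m₂ v) ≤ 0 :=
    ae_nonpos_of_exp_bound m₂ hm₂ hν₂₁meas hν₂₁pos (comp2 l₀) (comp2 ubar)
      (hass₂ _ hc2₀) hIbound₂ (fun t ht => hass₂ _ (hside₂ t ht))
  -- decomposition of dot6 ubar ρ
  have hsplit := dot6_muBar m₁ m₂ hν₁₂meas hν₂₁meas (fun v => (hν₁₂pos v).le)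
    (fun v => (hν₂₁pos v).le) hf₁meas hf₂meas hf₁0 hf₂0 hf₁int hf₂int ubar
  have hIint₁ : Integrable (fun v => ν₁₂ v * dot5 (comp1 ubar) (aVec m₁ v) * f₁ v) :=
    integrable_poly_g hν₁₂meas hf₁meas (fun v => (hν₁₂pos v).le) hf₁0 hf₁int (comp1 ubar) m₁
  have hIint₂ : Integrable (fun v => ν₂₁ v * dot5 (comp2 ubar) (aVec m₂ v) * f₂ v) :=
    integrable_poly_g hν₂₁meas hf₂meas (fun v => (hν₂₁pos v).le) hf₂0 hf₂int (comp2 ubar) m₂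
  have hI₁nonpos : (∫ v, ν₁₂ v * dot5 (comp1 ubar) (aVec m₁ v) * f₁ v) ≤ 0 := by
    refine integral_nonpos_of_ae ?_
    filter_upwards [hp₁] with v hv
    have h1 : dot5 (comp1 ubar) (aVec m₁ v) * (ν₁₂ v * f₁ v) ≤ 0 :=
      mul_nonpos_of_nonpos_of_nonneg hv (mul_nonneg (hν₁₂pos v).le (hf₁0 v))
    calc ν₁₂ v * dot5 (comp1 ubar) (aVec m₁ v) * f₁ v
        = dot5 (comp1 ubar) (aVec m₁ v) * (ν₁₂ v * f₁ v) := by ring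
      _ ≤ 0 := h1
  have hI₂nonpos : (∫ v, ν₂₁ v * dot5 (comp2 ubar) (aVec m₂ v) * f₂ v) ≤ 0 := by
    refine integral_nonpos_of_ae ?_
    filter_upwards [hp₂] with v hv
    have h1 : dot5 (comp2 ubar) (aVec m₂ v) * (ν₂₁ v * f₂ v) ≤ 0 :=
      mul_nonpos_of_nonpos_of_nonneg hv (mul_nonneg (hν₂₁pos v).le (hf₂0 v))
    calc ν₂₁ v * dot5 (comp2 ubar) (aVec m₂ v) * f₂ v
        = dot5 (comp2 ubar) (aVec m₂ v) * (ν₂₁ v * f₂ v) := by ring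
      _ ≤ 0 := h1
  -- dot6 ubar ρ is nonnegative, hence zero
  have hdge : 0 ≤ dot6 ubar ρ := by
    by_contra hneg
    push_neg at hneg
    have hnum : 0 < M' + dot6 l₀ ρ + 1 := by
      have h0 := hray 0 le_rfl
      rw [zero_smul, add_zero, hFdef] at h0
      simp only [zbar, PhiMix] at h0
      have hI1 := int_exp_nonneg m₁ (fun v => (hν₁₂pos v).le) (comp1 l₀)
      have hI2 := int_exp_nonneg m₂ (fun v => (hν₂₁pos v).le) (comp2 l₀)
      linarith
    set t : ℝ := (M' + dot6 l₀ ρ + 1) / (-dot6 ubar ρ) with htdef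
    have hdpos : 0 < -dot6 ubar ρ := by linarith
    have ht0 : 0 ≤ t := by positivity
    have h := hray t ht0
    have htprod : t * (-dot6 ubar ρ) = M' + dot6 l₀ ρ + 1 := by
      rw [htdef]; exact div_mul_cancel₀ _ hdpos.ne'
    have hI1 := int_exp_nonneg m₁ (fun v => (hν₁₂pos v).le) (comp1 (l₀ + t • ubar))
    have hI2 := int_exp_nonneg m₂ (fun v => (hν₂₁pos v).le) (comp2 (l₀ + t • ubar))
    rw [hFdef] at h
    simp only [zbar, PhiMix] at h
    rw [dot6_add_smul] at h
    nlinarith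
  have hI₁zero : (∫ v, ν₁₂ v * dot5 (comp1 ubar) (aVec m₁ v) * f₁ v) = 0 := by
    rw [hsplit] at hdge
    linarith
  have hI₂zero : (∫ v, ν₂₁ v * dot5 (comp2 ubar) (aVec m₂ v) * f₂ v) = 0 := by
    rw [hsplit] at hdge
    linarith
  -- conclude the direction components vanish
  have key : ∀ (mm : ℝ), 0 < mm → ∀ (νν ff : V3 → ℝ), Measurable νν → Measurable ff →
      (∀ v, 0 < νν v) → (∀ v, 0 ≤ ff v) → ¬ ff =ᵐ[volume] (fun _ => (0:ℝ)) →
      ∀ (c : L5), (∀ᵐ v, dot5 c (aVec mm v) ≤ 0) →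
      Integrable (fun v => νν v * dot5 c (aVec mm v) * ff v) →
      (∫ v, νν v * dot5 c (aVec mm v) * ff v) = 0 → c = 0 := by
    intro mm hmm νν ff hννm hffm hννpos hff0 hffne c hple hcint hczero
    by_contra hcne
    have hZ : volume {v : V3 | dot5 c (aVec mm v) = 0} = 0 :=
      dot5_aVec_zero_null mm hmm c hcne
    have hnn : 0 ≤ᵐ[volume] (fun v => -(νν v * dot5 c (aVec mm v) * ff v)) := by
      filter_upwards [hple] with v hv
      have h1 : dot5 c (aVec mm v) * (νν v * ff v) ≤ 0 :=
        mul_nonpos_of_nonpos_of_nonneg hv (mul_nonneg (hννpos v).le (hff0 v))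
      have h2 : νν v * dot5 c (aVec mm v) * ff v ≤ 0 := by nlinarith
      simp only [Pi.zero_apply]
      linarith
    have hneg0 : (∫ v, -(νν v * dot5 c (aVec mm v) * ff v)) = 0 := by
      rw [integral_neg, hczero, neg_zero]
    have hae := (integral_eq_zero_iff_of_nonneg_ae hnn hcint.neg).1 hneg0
    have hZae : ∀ᵐ v, v ∉ {v : V3 | dot5 c (aVec mm v) = 0} :=
      measure_eq_zero_iff_ae_notMem.1 hZ
    have hffae : ∀ᵐ v, ff v = 0 := by
      filter_upwards [hae, hZae] with v hv1 hv2
      simp only [Pi.zero_apply, neg_eq_zero] at hv1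
      rcases mul_eq_zero.1 hv1 with h | h
      · rcases mul_eq_zero.1 h with h' | h'
        · exact absurd h' (hννpos v).ne'
        · exact absurd h' hv2
      · exact h
    exact hffne hffae
  have hcomp1 : comp1 ubar = 0 :=
    key m₁ hm₁ ν₁₂ f₁ hν₁₂meas hf₁meas hν₁₂pos hf₁0 hf₁ne (comp1 ubar) hp₁ hIint₁ hI₁zero
  have hcomp2 : comp2 ubar = 0 :=
    key m₂ hm₂ ν₂₁ f₂ hν₂₁meas hf₂meas hν₂₁pos hf₂0 hf₂ne (comp2 ubar) hp₂ hIint₂ hI₂zero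
  have hzero : ubar = 0 := comp_eq_imp ubar 0 hcomp1 hcomp2
  rw [hzero, norm_zero] at hunorm
  exact one_ne_zero hunorm.symm

end AuxRay2
section AuxBoundary

lemma sublevel_eps_bound
    (m₁ m₂ : ℝ) (hm₁ : 0 < m₁) (hm₂ : 0 < m₂)
    (ν₁₂ ν₂₁ : V3 → ℝ) (hν₁₂meas : Measurable ν₁₂) (hν₂₁meas : Measurable ν₂₁)
    (hν₁₂pos : ∀ v, 0 < ν₁₂ v) (hν₂₁pos : ∀ v, 0 < ν₂₁ v)
    (hass₁ : ∀ l : L5, Integrable (fun v => ν₁₂ v * expA m₁ l v) ↔ l.2.2 < 0)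
    (hass₂ : ∀ l : L5, l.2.2 < 0 → Integrable (fun v => ν₂₁ v * expA m₂ l v))
    (ρ : L6) (M R : ℝ)
    (hR : ∀ l : L6, l.2.2.2 < 0 → zbar m₁ m₂ ν₁₂ ν₂₁ l ρ ≤ M → ‖l‖ ≤ R) :
    ∃ ε : ℝ, 0 < ε ∧ ∀ l : L6, l.2.2.2 < 0 →
      zbar m₁ m₂ ν₁₂ ν₂₁ l ρ ≤ M → l.2.2.2 ≤ -ε := by
  by_contra hcon
  push_neg at hcon
  have hseq : ∀ n : ℕ, ∃ l : L6, l.2.2.2 < 0 ∧ zbar m₁ m₂ ν₁₂ ν₂₁ l ρ ≤ M ∧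
      -(1/((n:ℝ)+1)) < l.2.2.2 := by
    intro n
    obtain ⟨l, h1, h2, h3⟩ := hcon (1/((n:ℝ)+1)) (by positivity)
    exact ⟨l, h1, h2, by linarith⟩
  choose l hlU hlF hllb using hseq
  have hlball : ∀ n, l n ∈ Metric.closedBall (0:L6) R := by
    intro n
    rw [Metric.mem_closedBall, dist_zero_right]
    exact hR (l n) (hlU n) (hlF n)
  obtain ⟨lstar, hstarmem, φ, hφ, hllim⟩ :=
    (isCompact_closedBall (0:L6) R).tendsto_subseq hlball
  have hproj : Continuous fun w : L6 => w.2.2.2 := by fun_prop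
  have hlim2 : Tendsto (fun n => (l (φ n)).2.2.2) atTop (𝓝 lstar.2.2.2) :=
    (hproj.tendsto lstar).comp hllim
  have hstar_le : lstar.2.2.2 ≤ 0 :=
    le_of_tendsto hlim2 (Filter.Eventually.of_forall fun n => (hlU (φ n)).le)
  have hstar_ge : 0 ≤ lstar.2.2.2 := by
    have hlow : ∀ n : ℕ, -(1/((n:ℝ)+1)) ≤ (l (φ n)).2.2.2 := by
      intro n
      have h1 := hllb (φ n)
      have hφn : (n:ℝ) ≤ (φ n : ℝ) := by exact_mod_cast hφ.le_apply
      have h2 : 1/((φ n : ℝ)+1) ≤ 1/((n:ℝ)+1) := by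
        apply one_div_le_one_div_of_le (by positivity)
        linarith
      linarith
    have hzero : Tendsto (fun n : ℕ => -(1/((n:ℝ)+1))) atTop (𝓝 0) := by
      have := (tendsto_one_div_add_atTop_nhds_zero_nat (𝕜 := ℝ)).neg
      simpa using this
    exact le_of_tendsto_of_tendsto' hzero hlim2 hlow
  have hstar0 : lstar.2.2.2 = 0 := le_antisymm hstar_le hstar_ge
  -- uniform bound on the first integral along the subsequence
  have hdtends : Tendsto (fun n => dot6 (l (φ n)) ρ) atTop (𝓝 (dot6 lstar ρ)) :=
    ((continuous_dot6_left ρ).tendsto lstar).comp hllim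
  set Cb : ℝ := M + dot6 lstar ρ + 1 with hCb
  have hIbound : ∀ᶠ n in atTop,
      (∫ v, ν₁₂ v * expA m₁ (comp1 (l (φ n))) v) ≤ Cb := by
    have hev : ∀ᶠ n in atTop, dot6 (l (φ n)) ρ < dot6 lstar ρ + 1 :=
      hdtends.eventually (gt_mem_nhds (lt_add_one _))
    filter_upwards [hev] with n hn
    have h := hlF (φ n)
    have hI2 := int_exp_nonneg m₂ (fun v => (hν₂₁pos v).le) (comp2 (l (φ n)))
    simp only [zbar, PhiMix] at h
    linarith
  -- Fatou
  set G : ℕ → V3 → ENNReal :=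
    fun n v => ENNReal.ofReal (ν₁₂ v * expA m₁ (comp1 (l (φ n))) v) with hG
  have hGmeas : ∀ n, Measurable (G n) :=
    fun n => (hν₁₂meas.mul (measurable_expA m₁ (comp1 (l (φ n))))).ennreal_ofReal
  have hcontw : ∀ v : V3, Continuous fun w : L6 => ν₁₂ v * expA m₁ (comp1 w) v := by
    intro v
    unfold expA
    exact continuous_const.mul
      (Real.continuous_exp.comp ((continuous_dot5_left (aVec m₁ v)).comp continuous_comp1))
  have hGlim : ∀ v : V3, Tendsto (fun n => G n v) atTop
      (𝓝 (ENNReal.ofReal (ν₁₂ v * expA m₁ (comp1 lstar) v))) := by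
    intro v
    exact (ENNReal.continuous_ofReal.tendsto _).comp
      (((hcontw v).tendsto lstar).comp hllim)
  have hIint : ∀ n, Integrable (fun v => ν₁₂ v * expA m₁ (comp1 (l (φ n))) v) :=
    fun n => (hass₁ (comp1 (l (φ n)))).2 (hlU (φ n))
  have hnn : ∀ (c : L5), 0 ≤ᵐ[volume] (fun v => ν₁₂ v * expA m₁ c v) :=
    fun c => Filter.Eventually.of_forall fun v =>
      mul_nonneg (hν₁₂pos v).le (Real.exp_pos _).le
  have hlin : ∀ n, (∫⁻ v, G n v) = ENNReal.ofReal (∫ v, ν₁₂ v * expA m₁ (comp1 (l (φ n))) v) :=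
    fun n => (ofReal_integral_eq_lintegral_ofReal (hIint n) (hnn _)).symm
  have hfatou : (∫⁻ v, ENNReal.ofReal (ν₁₂ v * expA m₁ (comp1 lstar) v))
      ≤ ENNReal.ofReal Cb := by
    have h1 : (∫⁻ v, ENNReal.ofReal (ν₁₂ v * expA m₁ (comp1 lstar) v))
        = ∫⁻ v, Filter.liminf (fun n => G n v) atTop := by
      refine lintegral_congr fun v => ?_
      exact ((hGlim v).liminf_eq).symm
    rw [h1]
    refine le_trans (lintegral_liminf_le hGmeas) ?_
    refine Filter.liminf_le_of_frequently_le ?_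
    have : ∀ᶠ n in atTop, (∫⁻ v, G n v) ≤ ENNReal.ofReal Cb := by
      filter_upwards [hIbound] with n hn
      rw [hlin n]
      exact ENNReal.ofReal_le_ofReal hn
    exact this.frequently
  have hintstar : Integrable (fun v => ν₁₂ v * expA m₁ (comp1 lstar) v) := by
    refine ⟨(hν₁₂meas.mul (measurable_expA m₁ (comp1 lstar))).aestronglyMeasurable, ?_⟩
    rw [hasFiniteIntegral_iff_ofReal (hnn _)]
    exact lt_of_le_of_lt hfatou ENNReal.ofReal_lt_top
  have := (hass₁ (comp1 lstar)).1 hintstar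
  have : lstar.2.2.2 < 0 := this
  rw [hstar0] at this
  exact lt_irrefl 0 this

end AuxBoundary

/-- for `ρ̄ = μ̄(f₁,f₂)` with admissible `f₁, f₂`, the mixture
dual function `λ ↦ z̄(λ;ρ̄)` attains its infimum over `Λ̄ = {λ ∈ ℝ⁶ : λ₂ < 0}`
at a unique point `λ* ∈ Λ̄`. -/
theorem mixture_dual_attains_min
    (m₁ m₂ : ℝ) (hm₁ : 0 < m₁) (hm₂ : 0 < m₂)
    (ν₁₂ ν₂₁ : V3 → ℝ) (hν₁₂meas : Measurable ν₁₂) (hν₂₁meas : Measurable ν₂₁)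
    (hν₁₂pos : ∀ v, 0 < ν₁₂ v) (hν₂₁pos : ∀ v, 0 < ν₂₁ v)
    (hass₁ : ∀ l : L5, Integrable (fun v => ν₁₂ v * expA m₁ l v) ↔ l.2.2 < 0)
    (hass₂ : ∀ l : L5, Integrable (fun v => ν₂₁ v * expA m₂ l v) ↔ l.2.2 < 0)
    (hass₁' : ∀ l : L5, l.2.2 < 0 →
      Integrable (fun v => ν₁₂ v * (1 + nsq v) * expA m₁ l v))
    (hass₂' : ∀ l : L5, l.2.2 < 0 →
      Integrable (fun v => ν₂₁ v * (1 + nsq v) * expA m₂ l v))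
    (f₁ f₂ : V3 → ℝ) (hf₁meas : Measurable f₁) (hf₂meas : Measurable f₂)
    (hf₁0 : ∀ v, 0 ≤ f₁ v) (hf₂0 : ∀ v, 0 ≤ f₂ v)
    (hf₁ne : ¬ f₁ =ᵐ[volume] (fun _ => (0 : ℝ)))
    (hf₂ne : ¬ f₂ =ᵐ[volume] (fun _ => (0 : ℝ)))
    (hf₁int : Integrable (fun v => ν₁₂ v * (1 + nsq v) * f₁ v))
    (hf₂int : Integrable (fun v => ν₂₁ v * (1 + nsq v) * f₂ v)) :
    ∃! lstar : L6, lstar.2.2.2 < 0 ∧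
      ∀ l : L6, l.2.2.2 < 0 →
        zbar m₁ m₂ ν₁₂ ν₂₁ lstar (muBar m₁ m₂ ν₁₂ ν₂₁ f₁ f₂) ≤
          zbar m₁ m₂ ν₁₂ ν₂₁ l (muBar m₁ m₂ ν₁₂ ν₂₁ f₁ f₂) := by
  have hassA : ∀ l : L5, l.2.2 < 0 → Integrable (fun v => ν₁₂ v * expA m₁ l v) :=
    fun l h => (hass₁ l).2 h
  have hassB : ∀ l : L5, l.2.2 < 0 → Integrable (fun v => ν₂₁ v * expA m₂ l v) :=
    fun l h => (hass₂ l).2 h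
  set ρ : L6 := muBar m₁ m₂ ν₁₂ ν₂₁ f₁ f₂ with hρ
  set F : L6 → ℝ := fun l => zbar m₁ m₂ ν₁₂ ν₂₁ l ρ with hFdef
  set l₀ : L6 := (0, 0, 0, -1) with hl₀def
  have hl₀U : l₀.2.2.2 < 0 := by norm_num [hl₀def]
  obtain ⟨R, hR⟩ := sublevel_norm_bound m₁ m₂ hm₁ hm₂ ν₁₂ ν₂₁ hν₁₂meas hν₂₁meas
    hν₁₂pos hν₂₁pos hassA hassB f₁ f₂ hf₁meas hf₂meas hf₁0 hf₂0 hf₁ne hf₂ne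
    hf₁int hf₂int (F l₀)
  obtain ⟨ε, hε, hεb⟩ := sublevel_eps_bound m₁ m₂ hm₁ hm₂ ν₁₂ ν₂₁ hν₁₂meas hν₂₁meas
    hν₁₂pos hν₂₁pos hass₁ hassB ρ (F l₀) R hR
  set K : Set L6 := Metric.closedBall (0:L6) R ∩ {l : L6 | l.2.2.2 ≤ -ε} with hK
  have hproj : Continuous fun w : L6 => w.2.2.2 := by fun_prop
  have hKcompact : IsCompact K :=
    (isCompact_closedBall (0:L6) R).inter_right (isClosed_le hproj continuous_const)
  have hKsubU : K ⊆ {l : L6 | l.2.2.2 < 0} := by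
    intro x hx
    have := hx.2
    simp only [Set.mem_setOf_eq] at this ⊢
    linarith
  have hl₀K : l₀ ∈ K := by
    constructor
    · rw [Metric.mem_closedBall, dist_zero_right]
      exact hR l₀ hl₀U le_rfl
    · exact hεb l₀ hl₀U le_rfl
  have hFcont : ContinuousOn F K := fun x hx =>
    (continuousAt_zbarF m₁ m₂ hm₁ hm₂ hν₁₂meas hν₂₁meas (fun v => (hν₁₂pos v).le)
      (fun v => (hν₂₁pos v).le) hassA hassB ρ x (hKsubU hx)).continuousWithinAt
  obtain ⟨lstar, hlstarK, hmin⟩ := hKcompact.exists_isMinOn ⟨l₀, hl₀K⟩ hFcont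
  have hlstarU : lstar.2.2.2 < 0 := hKsubU hlstarK
  have hglobal : ∀ l : L6, l.2.2.2 < 0 → F lstar ≤ F l := by
    intro l hl
    rcases le_or_gt (F l₀) (F l) with h | h
    · calc F lstar ≤ F l₀ := hmin hl₀K
        _ ≤ F l := h
    · have hlK : l ∈ K := by
        constructor
        · rw [Metric.mem_closedBall, dist_zero_right]
          exact hR l hl h.le
        · exact hεb l hl h.le
      exact hmin hlK
  have hstrict := zbar_strictConvexOn m₁ m₂ hm₁ hm₂ ν₁₂ ν₂₁ hν₁₂meas hν₂₁meas
    hν₁₂pos hν₂₁pos hassA hassB ρ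
  refine ⟨lstar, ⟨hlstarU, hglobal⟩, ?_⟩
  rintro y ⟨hyU, hymin⟩
  by_contra hne
  have hFeq : F y = F lstar :=
    le_antisymm (hymin lstar hlstarU) (hglobal y hyU)
  have hmemy : y ∈ {l : L6 | l.2.2.2 < 0} := hyU
  have hmems : lstar ∈ {l : L6 | l.2.2.2 < 0} := hlstarU
  have hhalf : (0:ℝ) < 1/2 := by norm_num
  have hz := hstrict.2 hmemy hmems hne hhalf hhalf (by norm_num)
  set z : L6 := (1/2 : ℝ) • y + (1/2 : ℝ) • lstar with hzdef
  have hzU : z.2.2.2 < 0 :=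
    convexU hmemy hmems hhalf.le hhalf.le (by norm_num)
  have hzlt : F z < F lstar := by
    have : (1/2 : ℝ) * F y + (1/2 : ℝ) * F lstar = F lstar := by
      rw [hFeq]; ring
    calc F z < (1/2 : ℝ) * F y + (1/2 : ℝ) * F lstar := by
          simpa [smul_eq_mul] using hz
      _ = F lstar := this
  have := hglobal z hzU
  linarith

end
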